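/- Let f : [a,b] → ℝ be continuous and g ∈ C¹[a,b] with g' > 0. Let LS_opt(n) be the maximal lower Riemann–Stieltjes sum of f with respect to g over n-point partitions. Then LS_opt(n) → ∫ₐᵇ f(t) g'(t) dt as n → ∞. -/

import Mathlib

open Set Filter MeasureTheory intervalIntegral Finset

/-- The maximal lower Riemann–Stieltjes sum of `f` w.r.t. `g` over `n`-point partitions of `[a,b]`. -/
noncomputable def LSopt (a b : ℝ) (f g : ℝ → ℝ) (n : ℕ) : ℝ :=
  sSup {S : ℝ | ∃ t : ℕ → ℝ, t 0 = a ∧ t n = b ∧ (∀ i < n, t i < t (i + 1)) ∧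
    S = ∑ i ∈ Finset.range n,
      sInf (f '' Set.Icc (t i) (t (i + 1))) * (g (t (i + 1)) - g (t i))}

/-- The optimal lower Riemann–Stieltjes sums converge to the integral. -/
theorem LSopt_tendsto_integral
    (a b : ℝ) (hab : a < b) (f g g' : ℝ → ℝ)
    (hf : ContinuousOn f (Set.Icc a b))
    (hg : ∀ t ∈ Set.Icc a b, HasDerivWithinAt g (g' t) (Set.Icc a b) t)
    (hg' : ContinuousOn g' (Set.Icc a b))
    (hgpos : ∀ t ∈ Set.Icc a b, 0 < g' t) :
    Filter.Tendsto (fun n : ℕ => LSopt a b f g n) Filter.atTop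
      (nhds (∫ t in a..b, f t * g' t)) := by
  have hgc : ContinuousOn g (Set.Icc a b) := fun t ht => (hg t ht).continuousWithinAt
  have hF : ContinuousOn (fun t => f t * g' t) (Set.Icc a b) := hf.mul hg'
  have hFint : ∀ c d, a ≤ c → c ≤ d → d ≤ b →
      IntervalIntegrable (fun t => f t * g' t) MeasureTheory.volume c d := by
    intro c d hac hcd hdb
    apply (hF.mono ?_).intervalIntegrable
    rw [Set.uIcc_of_le hcd]
    exact Set.Icc_subset_Icc hac hdb
  have hg'int : ∀ c d, a ≤ c → c ≤ d → d ≤ b →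
      IntervalIntegrable g' MeasureTheory.volume c d := by
    intro c d hac hcd hdb
    apply (hg'.mono ?_).intervalIntegrable
    rw [Set.uIcc_of_le hcd]
    exact Set.Icc_subset_Icc hac hdb
  have FTC : ∀ c d, a ≤ c → c ≤ d → d ≤ b → (∫ x in c..d, g' x) = g d - g c := by
    intro c d hac hcd hdb
    apply intervalIntegral.integral_eq_sub_of_hasDeriv_right_of_le hcd
      (hgc.mono (Set.Icc_subset_Icc hac hdb)) ?_ (hg'int c d hac hcd hdb)
    intro x hx
    have hx' : x ∈ Set.Ioo a b := ⟨lt_of_le_of_lt hac hx.1, lt_of_lt_of_le hx.2 hdb⟩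
    exact ((hg x (Set.Ioo_subset_Icc_self hx')).hasDerivAt
      (Icc_mem_nhds hx'.1 hx'.2)).hasDerivWithinAt
  have hmin : ∀ c d, a ≤ c → c ≤ d → d ≤ b → ∃ ξ ∈ Set.Icc c d,
      sInf (f '' Set.Icc c d) = f ξ ∧ ∀ x ∈ Set.Icc c d, f ξ ≤ f x := by
    intro c d hac hcd hdb
    have hsub : Set.Icc c d ⊆ Set.Icc a b := Set.Icc_subset_Icc hac hdb
    obtain ⟨ξ, hξ, hmin⟩ := isCompact_Icc.exists_isMinOn (Set.nonempty_Icc.2 hcd)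
      (hf.mono hsub)
    refine ⟨ξ, hξ, ?_, fun x hx => hmin hx⟩
    apply IsLeast.csInf_eq
    exact ⟨⟨ξ, hξ, rfl⟩, by rintro y ⟨x, hx, rfl⟩; exact hmin hx⟩
  have piece_lb : ∀ c d, a ≤ c → c ≤ d → d ≤ b →
      sInf (f '' Set.Icc c d) * (g d - g c) ≤ ∫ x in c..d, f x * g' x := by
    intro c d hac hcd hdb
    obtain ⟨ξ, hξ, hinf, hm⟩ := hmin c d hac hcd hdb
    rw [hinf, ← FTC c d hac hcd hdb, ← intervalIntegral.integral_const_mul]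
    apply intervalIntegral.integral_mono_on hcd
      ((hg'int c d hac hcd hdb).const_mul _) (hFint c d hac hcd hdb)
    intro x hx
    exact mul_le_mul_of_nonneg_right (hm x hx)
      (le_of_lt (hgpos x (Set.Icc_subset_Icc hac hdb hx)))
  have hbounds : ∀ n (t : ℕ → ℝ), t 0 = a → t n = b → (∀ i < n, t i < t (i + 1)) →
      ∀ j ≤ n, ∀ i ≤ j, t i ≤ t j := by
    intro n t h0 hn hst j
    induction j with
    | zero => intro _ i hi; simp [Nat.le_zero.1 hi]
    | succ j ih =>
      intro hjn i hi
      rcases Nat.lt_or_ge i (j + 1) with h | h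
      · exact le_trans (ih (le_trans (Nat.le_succ j) hjn) i (Nat.lt_succ_iff.1 h))
          (le_of_lt (hst j (Nat.lt_of_succ_le hjn)))
      · have : i = j + 1 := le_antisymm hi h
        simp [this]
  have sum_int : ∀ n (t : ℕ → ℝ), t 0 = a → t n = b → (∀ i < n, t i < t (i + 1)) →
      ∑ i ∈ Finset.range n, (∫ x in (t i)..(t (i + 1)), f x * g' x)
        = ∫ x in a..b, f x * g' x := by
    intro n t h0 hn hst
    rw [← h0, ← hn]
    apply intervalIntegral.sum_integral_adjacent_intervals
    intro k hk
    refine hFint _ _ ?_ (le_of_lt (hst k hk)) ?_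
    · rw [← h0]; exact hbounds n t h0 hn hst k hk.le 0 (Nat.zero_le k)
    · rw [← hn]; exact hbounds n t h0 hn hst n le_rfl (k + 1) hk
  have hub : ∀ n, ∀ S ∈ {S : ℝ | ∃ t : ℕ → ℝ, t 0 = a ∧ t n = b ∧
      (∀ i < n, t i < t (i + 1)) ∧
      S = ∑ i ∈ Finset.range n,
        sInf (f '' Set.Icc (t i) (t (i + 1))) * (g (t (i + 1)) - g (t i))},
      S ≤ ∫ x in a..b, f x * g' x := by
    rintro n S ⟨t, h0, hn, hst, rfl⟩
    rw [← sum_int n t h0 hn hst]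
    refine Finset.sum_le_sum fun i hi => ?_
    rw [Finset.mem_range] at hi
    refine piece_lb _ _ ?_ (le_of_lt (hst i hi)) ?_
    · rw [← h0]; exact hbounds n t h0 hn hst i hi.le 0 (Nat.zero_le i)
    · rw [← hn]; exact hbounds n t h0 hn hst n le_rfl (i + 1) hi
  have hucf : ∀ ε > 0, ∃ δ > 0, ∀ x ∈ Set.Icc a b, ∀ y ∈ Set.Icc a b,
      dist x y < δ → dist (f x) (f y) < ε := fun ε hε =>
    Metric.uniformContinuousOn_iff.1
      (isCompact_Icc.uniformContinuousOn_of_continuous hf) ε hε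
  have hgba : 0 ≤ g b - g a := by
    rw [← FTC a b le_rfl hab.le le_rfl]
    exact intervalIntegral.integral_nonneg hab.le fun x hx => (hgpos x hx).le
  rw [Metric.tendsto_atTop]
  intro ε hε
  set ε' := ε / (2 * (g b - g a) + 2) with hε'def
  have hε'pos : 0 < ε' := by positivity
  have hε'gba : ε' * (g b - g a) ≤ ε / 2 := by
    rw [hε'def, div_mul_eq_mul_div, div_le_div_iff₀ (by positivity) (by norm_num)]
    nlinarith [hε.le, hgba]
  obtain ⟨δ, hδpos, hδ⟩ := hucf ε' hε'pos
  obtain ⟨N, hN⟩ := exists_nat_gt ((b - a) / δ)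
  refine ⟨max N 1, fun n hn => ?_⟩
  have hn1 : 1 ≤ n := le_trans (le_max_right N 1) hn
  have hnN : (N : ℝ) ≤ n := by exact_mod_cast le_trans (le_max_left N 1) hn
  have hn0 : (0 : ℝ) < n := by exact_mod_cast hn1
  have hnne : (n : ℝ) ≠ 0 := ne_of_gt hn0
  have hba : (0:ℝ) < b - a := by linarith
  set c : ℝ := (b - a) / n with hcdef
  have hcpos : 0 < c := by positivity
  have hcδ : c < δ := by
    rw [hcdef, div_lt_iff₀ hn0]
    have h1 : b - a < N * δ := (div_lt_iff₀ hδpos).1 hN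
    have h2 : (N : ℝ) * δ ≤ n * δ := mul_le_mul_of_nonneg_right hnN hδpos.le
    linarith [mul_comm δ (n : ℝ)]
  set u : ℕ → ℝ := fun i => a + i * c with hu
  have hu0 : u 0 = a := by simp [hu]
  have hun : u n = b := by
    simp only [hu, hcdef]
    field_simp
    ring
  have hustep : ∀ i : ℕ, u (i + 1) - u i = c := by
    intro i; simp only [hu]; push_cast; ring
  have hst : ∀ i < n, u i < u (i + 1) := by
    intro i _; have := hustep i; linarith
  have huIcc : ∀ i ≤ n, a ≤ u i ∧ u i ≤ b := by
    intro i hi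
    constructor
    · rw [← hu0]; exact hbounds n u hu0 hun hst i hi 0 (Nat.zero_le i)
    · rw [← hun]; exact hbounds n u hu0 hun hst n le_rfl i hi
  -- piece upper bound
  have piece_ub : ∀ i < n, (∫ x in (u i)..(u (i + 1)), f x * g' x)
      ≤ (sInf (f '' Set.Icc (u i) (u (i + 1))) + ε') * (g (u (i + 1)) - g (u i)) := by
    intro i hi
    have hac : a ≤ u i := (huIcc i hi.le).1
    have hcd : u i ≤ u (i + 1) := (hst i hi).le
    have hdb : u (i + 1) ≤ b := (huIcc (i + 1) hi).2
    obtain ⟨ξ, hξ, hinf, _⟩ := hmin (u i) (u (i + 1)) hac hcd hdb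
    rw [hinf, ← FTC _ _ hac hcd hdb, ← intervalIntegral.integral_const_mul]
    apply intervalIntegral.integral_mono_on hcd (hFint _ _ hac hcd hdb)
      ((hg'int _ _ hac hcd hdb).const_mul _)
    intro x hx
    have hxab : x ∈ Set.Icc a b := Set.Icc_subset_Icc hac hdb hx
    have hξab : ξ ∈ Set.Icc a b := Set.Icc_subset_Icc hac hdb hξ
    have hdist : dist x ξ < δ := by
      rw [Real.dist_eq]
      have h1 : |x - ξ| ≤ u (i + 1) - u i :=
        abs_le.2 ⟨by linarith [hx.1, hx.2, hξ.1, hξ.2], by linarith [hx.1, hx.2, hξ.1, hξ.2]⟩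
      calc |x - ξ| ≤ u (i + 1) - u i := h1
        _ = c := hustep i
        _ < δ := hcδ
    have hfx : f x ≤ f ξ + ε' := by
      have := hδ x hxab ξ hξab hdist
      rw [Real.dist_eq, abs_lt] at this
      linarith [this.1]
    exact mul_le_mul_of_nonneg_right hfx (hgpos x hxab).le
  set S := ∑ i ∈ Finset.range n,
      sInf (f '' Set.Icc (u i) (u (i + 1))) * (g (u (i + 1)) - g (u i)) with hSdef
  have hmem : S ∈ {S : ℝ | ∃ t : ℕ → ℝ, t 0 = a ∧ t n = b ∧ (∀ i < n, t i < t (i + 1)) ∧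
      S = ∑ i ∈ Finset.range n,
        sInf (f '' Set.Icc (t i) (t (i + 1))) * (g (t (i + 1)) - g (t i))} :=
    ⟨u, hu0, hun, hst, rfl⟩
  have hIle : (∫ x in a..b, f x * g' x) ≤ S + ε' * (g b - g a) := by
    have h1 : (∫ x in a..b, f x * g' x)
        = ∑ i ∈ Finset.range n, ∫ x in (u i)..(u (i + 1)), f x * g' x :=
      (sum_int n u hu0 hun hst).symm
    have h2 : ∑ i ∈ Finset.range n, (∫ x in (u i)..(u (i + 1)), f x * g' x)
        ≤ ∑ i ∈ Finset.range n,
          (sInf (f '' Set.Icc (u i) (u (i + 1))) + ε') * (g (u (i + 1)) - g (u i)) :=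
      Finset.sum_le_sum fun i hi => piece_ub i (Finset.mem_range.1 hi)
    have h3 : ∑ i ∈ Finset.range n,
          (sInf (f '' Set.Icc (u i) (u (i + 1))) + ε') * (g (u (i + 1)) - g (u i))
        = S + ε' * (g b - g a) := by
      have htel : ∑ i ∈ Finset.range n, (g (u (i + 1)) - g (u i)) = g b - g a := by
        rw [Finset.sum_range_sub (fun i => g (u i)), hun, hu0]
      simp only [add_mul, Finset.sum_add_distrib, hSdef]
      rw [← Finset.mul_sum, htel]
    rw [h1]; rw [h3] at h2; exact h2
  -- now the sSup
  have hbdd : BddAbove {S : ℝ | ∃ t : ℕ → ℝ, t 0 = a ∧ t n = b ∧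
      (∀ i < n, t i < t (i + 1)) ∧
      S = ∑ i ∈ Finset.range n,
        sInf (f '' Set.Icc (t i) (t (i + 1))) * (g (t (i + 1)) - g (t i))} :=
    ⟨∫ x in a..b, f x * g' x, fun x hx => hub n x hx⟩
  have hLle : LSopt a b f g n ≤ ∫ x in a..b, f x * g' x := by
    rw [LSopt]
    exact csSup_le ⟨S, hmem⟩ (hub n)
  have hLge : S ≤ LSopt a b f g n := by
    rw [LSopt]
    exact le_csSup hbdd hmem
  rw [Real.dist_eq, abs_lt]
  constructor <;> [skip; skip] <;> nlinarith [hε'gba, hIle, hLle, hLge, hε]
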